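/- Let p(z,w) be a stable polynomial of degree (n,m), and define the reflection p̃(z,w) = z^n w^m conj(p(1/z̄,1/w̄)). Then in L²(dσ/|p|²) on T², p̃ is orthogonal to every monomial z^i w^j with (i,j) not ≥ (n,m), i.e., i<n or j<m. -/

import Mathlib

open Complex MeasureTheory Finset
open scoped ComplexInnerProductSpace

noncomputable section

/-- Evaluation of a bivariate polynomial with coefficient array `c i j`,
supported on `0 ≤ i ≤ n`, `0 ≤ j ≤ m`. -/
def evalP (n m : ℕ) (c : ℕ → ℕ → ℂ) (z w : ℂ) : ℂ :=
  ∑ i ∈ Finset.range (n + 1), ∑ j ∈ Finset.range (m + 1), c i j * z ^ i * w ^ j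

/-- `p` is stable: nonvanishing on the closed bidisk. -/
def Stable (n m : ℕ) (c : ℕ → ℕ → ℂ) : Prop :=
  ∀ z w : ℂ, ‖z‖ ≤ 1 → ‖w‖ ≤ 1 → evalP n m c z w ≠ 0

/-- `p` has degree exactly `n` in `z` and `m` in `w`. -/
def DegreeNM (n m : ℕ) (c : ℕ → ℕ → ℂ) : Prop :=
  (∃ j, c n j ≠ 0) ∧ (∃ i, c i m ≠ 0)

/-- Coefficients of the reflected polynomial `p̃(z,w) = zⁿ wᵐ conj (p (1/z̄, 1/w̄))`. -/
def reflC (n m : ℕ) (c : ℕ → ℕ → ℂ) : ℕ → ℕ → ℂ :=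
  fun i j => star (c (n - i) (m - j))

/-- The Laurent monomial `z^i w^j` as a function on the torus, `z = e^{iθ}`, `w = e^{iφ}`. -/
def tmono (i j : ℤ) : ℝ → ℝ → ℂ :=
  fun θ φ => Complex.exp (((i : ℂ) * (θ : ℂ) + (j : ℂ) * (φ : ℂ)) * Complex.I)

/-- A bivariate polynomial as a function on the torus. -/
def onT (n m : ℕ) (c : ℕ → ℕ → ℂ) : ℝ → ℝ → ℂ :=
  fun θ φ => evalP n m c (Complex.exp ((θ : ℂ) * Complex.I)) (Complex.exp ((φ : ℂ) * Complex.I))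

/-- The inner product `⟨f,g⟩ = ∫_{𝕋²} f ḡ dσ/|p|²` of `L²(dσ/|p|²)`. -/
def ip (n m : ℕ) (c : ℕ → ℕ → ℂ) (f g : ℝ → ℝ → ℂ) : ℂ :=
  (1 / (2 * Real.pi) ^ 2 : ℂ) *
    ∫ θ in (0 : ℝ)..(2 * Real.pi), ∫ φ in (0 : ℝ)..(2 * Real.pi),
      f θ φ * star (g θ φ) / ((Complex.normSq (onT n m c θ φ) : ℝ) : ℂ)

/-- Numerator of the Christoffel–Darboux-type kernel `L`:
`zⁿ (p(z,w) conj(p(1/z̄,η)) − p̃(z,w) conj(p̃(1/z̄,η)))`. -/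
def Lnum (n m : ℕ) (c : ℕ → ℕ → ℂ) (z w η : ℂ) : ℂ :=
  z ^ n * (evalP n m c z w * star (evalP n m c (star z)⁻¹ η)
    - evalP n m (reflC n m c) z w * star (evalP n m (reflC n m c) (star z)⁻¹ η))

/-- The kernel built from coefficient arrays `a k` for the polynomials `a_k(z,w)`:
`L(z,w;η) = Σ_{k<m} a_k(z,w) η̄^k`. -/
def Lsum (n m : ℕ) (a : ℕ → ℕ → ℕ → ℂ) (z w η : ℂ) : ℂ :=
  ∑ k ∈ Finset.range m, evalP (2 * n) (m - 1) (a k) z w * (star η) ^ k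

/-- `a` is the coefficient array of the kernel `L` associated with `p`:
`(1 - w η̄) L(z,w;η) = Lnum(z,w;η)` for all `z ≠ 0`. -/
def IsLCoeff (n m : ℕ) (c : ℕ → ℕ → ℂ) (a : ℕ → ℕ → ℕ → ℂ) : Prop :=
  ∀ z w η : ℂ, z ≠ 0 → (1 - w * star η) * Lsum n m a z w η = Lnum n m c z w η

end

section Aux

open Metric

private lemma norm_expI (θ : ℝ) : ‖Complex.exp ((θ : ℂ) * Complex.I)‖ = 1 := by
  simpa using Complex.abs_exp_ofReal_mul_I θ

private lemma conj_expI (θ : ℝ) :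
    (starRingEnd ℂ) (Complex.exp ((θ : ℂ) * Complex.I)) =
      Complex.exp (-((θ : ℂ) * Complex.I)) := by
  rw [← Complex.exp_conj]; simp

private lemma conj_eq_inv {z : ℂ} (hz : ‖z‖ = 1) : (starRingEnd ℂ) z = z⁻¹ := by
  apply eq_inv_of_mul_eq_one_right
  rw [Complex.mul_conj]
  norm_cast
  rw [Complex.normSq_eq_norm_sq, hz]; norm_num

private lemma evalP_reflC (n m : ℕ) (c : ℕ → ℕ → ℂ) (z w : ℂ)
    (hz : ‖z‖ = 1) (hw : ‖w‖ = 1) :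
    evalP n m (reflC n m c) z w = z ^ n * w ^ m * (starRingEnd ℂ) (evalP n m c z w) := by
  have hz0 : z ≠ 0 := by intro h; rw [h] at hz; simp at hz
  have hw0 : w ≠ 0 := by intro h; rw [h] at hw; simp at hw
  have hzi := conj_eq_inv hz
  have hwi := conj_eq_inv hw
  unfold evalP reflC
  rw [map_sum, Finset.mul_sum]
  rw [← Finset.sum_range_reflect]
  refine Finset.sum_congr rfl ?_
  intro i hi
  have hin : i ≤ n := Nat.lt_succ_iff.mp (Finset.mem_range.mp hi)
  rw [map_sum, Finset.mul_sum]
  rw [← Finset.sum_range_reflect]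
  refine Finset.sum_congr rfl ?_
  intro j hj
  have hjm : j ≤ m := Nat.lt_succ_iff.mp (Finset.mem_range.mp hj)
  simp only [Nat.add_sub_cancel, Nat.sub_sub_self hin, Nat.sub_sub_self hjm]
  rw [map_mul, map_mul, map_pow, map_pow, hzi, hwi,
    pow_sub₀ z hz0 hin, pow_sub₀ w hw0 hjm]
  push_cast
  simp only [Complex.star_def]
  ring

private lemma evalP_diff_w (n m : ℕ) (c : ℕ → ℕ → ℂ) (z : ℂ) :
    Differentiable ℂ (fun w => evalP n m c z w) := by
  unfold evalP
  apply Differentiable.fun_sum; intro i _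
  apply Differentiable.fun_sum; intro j _
  exact (differentiable_const _).mul (differentiable_pow j)

private lemma evalP_diff_z (n m : ℕ) (c : ℕ → ℕ → ℂ) (w : ℂ) :
    Differentiable ℂ (fun z => evalP n m c z w) := by
  unfold evalP
  apply Differentiable.fun_sum; intro i _
  apply Differentiable.fun_sum; intro j _
  exact ((differentiable_const _).mul (differentiable_pow i)).mul (differentiable_const _)

private lemma intervalIntegral_conj (f : ℝ → ℂ) (a b : ℝ) :
    (∫ x in a..b, (starRingEnd ℂ) (f x)) = (starRingEnd ℂ) (∫ x in a..b, f x) := by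
  rw [intervalIntegral, intervalIntegral, integral_conj, integral_conj, ← map_sub]

/-- Cauchy-type vanishing: if `g` is entire and nonvanishing on the closed unit disk,
then `∫_0^{2π} e^{(k+1)θi} / g(e^{θi}) dθ = 0`. -/
private lemma cauchy_zero (k : ℕ) (g : ℂ → ℂ) (hg : Differentiable ℂ g)
    (hne : ∀ z ∈ Metric.closedBall (0 : ℂ) 1, g z ≠ 0) :
    (∫ θ in (0 : ℝ)..(2 * Real.pi),
      Complex.exp (((k : ℂ) + 1) * (θ : ℂ) * Complex.I) /
        g (Complex.exp ((θ : ℂ) * Complex.I))) = 0 := by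
  have h0 : (∮ z in C((0 : ℂ), 1), z ^ k / g z) = 0 := by
    apply Complex.circleIntegral_eq_zero_of_differentiable_on_off_countable zero_le_one
      Set.countable_empty
    · exact ContinuousOn.div (continuous_pow k).continuousOn hg.continuous.continuousOn
        (fun z hz => hne z hz)
    · intro z hz
      exact DifferentiableAt.div (differentiableAt_pow k) (hg z)
        (hne z (Metric.ball_subset_closedBall hz.1))
  have hI : Complex.I * (∫ θ in (0 : ℝ)..(2 * Real.pi),
      Complex.exp (((k : ℂ) + 1) * (θ : ℂ) * Complex.I) /
        g (Complex.exp ((θ : ℂ) * Complex.I))) = ∮ z in C((0 : ℂ), 1), z ^ k / g z := by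
    rw [← intervalIntegral.integral_const_mul]
    simp only [circleIntegral, deriv_circleMap, circleMap, Complex.ofReal_one, one_mul,
      zero_add, smul_eq_mul]
    apply intervalIntegral.integral_congr
    intro θ _
    dsimp only
    have hexp : Complex.exp (((k : ℂ) + 1) * (θ : ℂ) * Complex.I) =
        Complex.exp ((θ : ℂ) * Complex.I) * Complex.exp ((θ : ℂ) * Complex.I) ^ k := by
      rw [← Complex.exp_nat_mul, ← Complex.exp_add]
      congr 1
      push_cast
      ring
    rw [hexp]
    ring
  have := hI.trans h0
  rcases mul_eq_zero.mp this with h | h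
  · exact absurd h Complex.I_ne_zero
  · exact h

end Aux

/-- In L²(dσ/|p|²), the reflection p̃ is orthogonal to every
monomial z^i w^j with (i,j) ≱ (n,m), i.e. i < n or j < m. -/
theorem statement1 (n m : ℕ) (c : ℕ → ℕ → ℂ)
    (hstable : Stable n m c) (hdeg : DegreeNM n m c)
    (i j : ℤ) (hij : i < (n : ℤ) ∨ j < (m : ℤ)) :
    ip n m c (tmono i j) (onT n m (reflC n m c)) = 0 := by
  have h2π : (0 : ℝ) ≤ 2 * Real.pi := by positivity
  set Q : ℝ → ℝ → ℂ := fun θ φ =>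
    evalP n m c (Complex.exp ((θ : ℂ) * Complex.I)) (Complex.exp ((φ : ℂ) * Complex.I)) with hQdef
  set G : ℝ → ℝ → ℂ := fun θ φ =>
    Complex.exp ((((n : ℂ) - (i : ℂ)) * (θ : ℂ) + ((m : ℂ) - (j : ℂ)) * (φ : ℂ)) * Complex.I)
      / Q θ φ with hGdef
  have hQ : ∀ θ φ : ℝ, Q θ φ ≠ 0 := fun θ φ =>
    hstable _ _ (le_of_eq (norm_expI θ)) (le_of_eq (norm_expI φ))
  -- pointwise identity: the integrand is the conjugate of `G`
  have hpt : ∀ θ φ : ℝ,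
      tmono i j θ φ * star (onT n m (reflC n m c) θ φ) /
          ((Complex.normSq (onT n m c θ φ) : ℝ) : ℂ) = (starRingEnd ℂ) (G θ φ) := by
    intro θ φ
    have hP : Q θ φ ≠ 0 := hQ θ φ
    have hPc : (starRingEnd ℂ) (Q θ φ) ≠ 0 := by
      simpa using hP
    have h1 : onT n m (reflC n m c) θ φ =
        Complex.exp ((θ : ℂ) * Complex.I) ^ n * Complex.exp ((φ : ℂ) * Complex.I) ^ m *
          (starRingEnd ℂ) (Q θ φ) := by
      rw [show onT n m (reflC n m c) θ φ = evalP n m (reflC n m c)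
        (Complex.exp ((θ : ℂ) * Complex.I)) (Complex.exp ((φ : ℂ) * Complex.I)) from rfl]
      rw [evalP_reflC n m c _ _ (norm_expI θ) (norm_expI φ)]
    have h2 : onT n m c θ φ = Q θ φ := rfl
    rw [h1, h2, hGdef]
    simp only [tmono, map_div₀, ← Complex.exp_conj, map_mul, map_add, map_sub,
      Complex.conj_I, Complex.conj_ofReal, map_natCast, map_intCast, star_mul', star_pow,
      Complex.star_def, Complex.conj_conj, conj_expI, ← Complex.mul_conj]
    rw [div_eq_div_iff (mul_ne_zero hP hPc) hPc]
    have hE : Complex.exp (((i : ℂ) * (θ : ℂ) + (j : ℂ) * (φ : ℂ)) * Complex.I) *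
        Complex.exp ((θ : ℂ) * -Complex.I) ^ n * Complex.exp ((φ : ℂ) * -Complex.I) ^ m =
        Complex.exp ((((n : ℂ) - (i : ℂ)) * (θ : ℂ) + ((m : ℂ) - (j : ℂ)) * (φ : ℂ)) *
          -Complex.I) := by
      rw [← Complex.exp_nat_mul, ← Complex.exp_nat_mul, ← Complex.exp_add, ← Complex.exp_add]
      congr 1
      ring
    linear_combination (Q θ φ * (starRingEnd ℂ) (Q θ φ)) * hE
  -- the conjugate integral vanishes
  have hG : (∫ θ in (0 : ℝ)..(2 * Real.pi), ∫ φ in (0 : ℝ)..(2 * Real.pi), G θ φ) = 0 := by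
    rcases hij with hi | hj
    · -- i < n : integrate in θ first (Fubini)
      have hGcont : Continuous (Function.uncurry G) := by
        apply Continuous.div
        · apply Complex.continuous_exp.comp
          fun_prop
        · rw [hQdef]
          unfold evalP
          fun_prop
        · exact fun q => hQ q.1 q.2
      have hint : MeasureTheory.Integrable (Function.uncurry G)
          ((volume.restrict (Set.Ioc (0 : ℝ) (2 * Real.pi))).prod
            (volume.restrict (Set.Ioc (0 : ℝ) (2 * Real.pi)))) := by
        rw [Measure.prod_restrict]
        exact (hGcont.continuousOn.integrableOn_compact
          (isCompact_Icc.prod isCompact_Icc)).mono_set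
          (Set.prod_mono Set.Ioc_subset_Icc_self Set.Ioc_subset_Icc_self)
      simp only [intervalIntegral.integral_of_le h2π]
      rw [MeasureTheory.integral_integral_swap hint]
      have hinner : ∀ φ : ℝ, (∫ θ in Set.Ioc (0 : ℝ) (2 * Real.pi), G θ φ) = 0 := by
        intro φ
        rw [← intervalIntegral.integral_of_le h2π]
        set k : ℕ := ((n : ℤ) - i - 1).toNat with hkdef
        have hk : ((k : ℂ) + 1) = (n : ℂ) - (i : ℂ) := by
          have : (k : ℤ) + 1 = (n : ℤ) - i := by
            rw [hkdef, Int.toNat_of_nonneg (by omega)]; ring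
          exact_mod_cast this
        have hsplit : ∀ θ : ℝ, G θ φ =
            Complex.exp (((m : ℂ) - (j : ℂ)) * (φ : ℂ) * Complex.I) *
              (Complex.exp (((k : ℂ) + 1) * (θ : ℂ) * Complex.I) /
                evalP n m c (Complex.exp ((θ : ℂ) * Complex.I))
                  (Complex.exp ((φ : ℂ) * Complex.I))) := by
          intro θ
          rw [hGdef]
          simp only
          rw [add_mul, Complex.exp_add, hk, hQdef]
          ring
        rw [intervalIntegral.integral_congr (fun θ _ => hsplit θ),
          intervalIntegral.integral_const_mul]
        rw [cauchy_zero k _ (evalP_diff_z n m c _) ?_, mul_zero]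
        intro z hz
        apply hstable
        · simpa [Complex.dist_eq] using hz
        · exact le_of_eq (norm_expI φ)
      simp only [hinner, MeasureTheory.integral_zero]
    · -- j < m : integrate in φ first
      have hinner : ∀ θ : ℝ, (∫ φ in (0 : ℝ)..(2 * Real.pi), G θ φ) = 0 := by
        intro θ
        set k : ℕ := ((m : ℤ) - j - 1).toNat with hkdef
        have hk : ((k : ℂ) + 1) = (m : ℂ) - (j : ℂ) := by
          have : (k : ℤ) + 1 = (m : ℤ) - j := by
            rw [hkdef, Int.toNat_of_nonneg (by omega)]; ring
          exact_mod_cast this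
        have hsplit : ∀ φ : ℝ, G θ φ =
            Complex.exp (((n : ℂ) - (i : ℂ)) * (θ : ℂ) * Complex.I) *
              (Complex.exp (((k : ℂ) + 1) * (φ : ℂ) * Complex.I) /
                evalP n m c (Complex.exp ((θ : ℂ) * Complex.I))
                  (Complex.exp ((φ : ℂ) * Complex.I))) := by
          intro φ
          rw [hGdef]
          simp only
          rw [add_mul, Complex.exp_add, hk, hQdef]
          ring
        rw [intervalIntegral.integral_congr (fun φ _ => hsplit φ),
          intervalIntegral.integral_const_mul]
        rw [cauchy_zero k _ (evalP_diff_w n m c _) ?_, mul_zero]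
        intro w hw
        apply hstable
        · exact le_of_eq (norm_expI θ)
        · simpa [Complex.dist_eq] using hw
      simp only [hinner, intervalIntegral.integral_zero]
  -- put it together
  unfold ip
  have : (∫ θ in (0 : ℝ)..(2 * Real.pi), ∫ φ in (0 : ℝ)..(2 * Real.pi),
      tmono i j θ φ * star (onT n m (reflC n m c) θ φ) /
        ((Complex.normSq (onT n m c θ φ) : ℝ) : ℂ)) = 0 := by
    calc (∫ θ in (0 : ℝ)..(2 * Real.pi), ∫ φ in (0 : ℝ)..(2 * Real.pi),
        tmono i j θ φ * star (onT n m (reflC n m c) θ φ) /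
          ((Complex.normSq (onT n m c θ φ) : ℝ) : ℂ))
        = ∫ θ in (0 : ℝ)..(2 * Real.pi), ∫ φ in (0 : ℝ)..(2 * Real.pi),
            (starRingEnd ℂ) (G θ φ) := by
          apply intervalIntegral.integral_congr
          intro θ _
          apply intervalIntegral.integral_congr
          intro φ _
          exact hpt θ φ
      _ = (starRingEnd ℂ) (∫ θ in (0 : ℝ)..(2 * Real.pi),
            ∫ φ in (0 : ℝ)..(2 * Real.pi), G θ φ) := by
          rw [← intervalIntegral_conj]
          apply intervalIntegral.integral_congr
          intro θ _
          exact intervalIntegral_conj _ _ _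
      _ = 0 := by rw [hG, map_zero]
  rw [this, mul_zero]
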